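/- arXiv:1810.04120 — 5 statements merged into one kernel-verified Lean document; each statement's English description precedes it below -/
import Mathlib

section
/- Let G be a graph with n vertices and m edges whose largest adjacency eigenvalue λ₁ satisfies λ₁ ≥ 2m/n. Then EE(G) ≥ e^{2m/n} + (n - 1) - 2m/n. -/
lemma sum_eig_eq_trace {n : ℕ} (A : Matrix (Fin n) (Fin n) ℝ) (hA : A.IsHermitian) :
    ∑ i, hA.eigenvalues i = A.trace := by
  conv_rhs => rw [hA.spectral_theorem]
  rw [Unitary.conjStarAlgAut_apply]
  rw [Matrix.trace_mul_cycle]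
  rw [Unitary.coe_star_mul_self, one_mul, Matrix.trace_diagonal]
  simp

theorem stmt_2 {n : ℕ} (G : SimpleGraph (Fin n)) [DecidableRel G.Adj]
    (m : ℕ) (hm : m = G.edgeFinset.card)
    (hH : (G.adjMatrix ℝ).IsHermitian)
    (i₀ : Fin n) (hmax : ∀ i, hH.eigenvalues i ≤ hH.eigenvalues i₀)
    (hlam : hH.eigenvalues i₀ ≥ 2 * (m : ℝ) / n) :
    ∑ i, Real.exp (hH.eigenvalues i) ≥
      Real.exp (2 * (m : ℝ) / n) + ((n : ℝ) - 1) - 2 * (m : ℝ) / n := by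
  have htr : ∑ i, hH.eigenvalues i = 0 := by
    rw [sum_eig_eq_trace _ hH, SimpleGraph.trace_adjMatrix]
  set c : ℝ := 2 * (m : ℝ) / n with hc
  set L : ℝ := hH.eigenvalues i₀ with hL
  -- exp L ≥ exp c + (L - c)
  have h1 : Real.exp c + (L - c) ≤ Real.exp L := by
    have h := Real.add_one_le_exp (L - c)
    have hec : (1 : ℝ) ≤ Real.exp c := Real.one_le_exp_iff.mpr (by positivity)
    calc Real.exp c + (L - c) ≤ Real.exp c + Real.exp c * (L - c) := by nlinarith
      _ = Real.exp c * (L - c + 1) := by ring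
      _ ≤ Real.exp c * Real.exp (L - c) := by nlinarith [Real.exp_pos c]
      _ = Real.exp L := by rw [← Real.exp_add]; ring_nf
  -- for each other i, exp λ ≥ 1 + λ
  have h2 : ∀ i ∈ Finset.univ.erase i₀, (1 : ℝ) + hH.eigenvalues i ≤ Real.exp (hH.eigenvalues i) := by
    intro i _
    linarith [Real.add_one_le_exp (hH.eigenvalues i)]
  have hsplit : ∑ i, Real.exp (hH.eigenvalues i)
      = Real.exp L + ∑ i ∈ Finset.univ.erase i₀, Real.exp (hH.eigenvalues i) := by
    rw [← Finset.add_sum_erase _ _ (Finset.mem_univ i₀)]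
  have hsum2 : ∑ i ∈ Finset.univ.erase i₀, ((1 : ℝ) + hH.eigenvalues i)
      ≤ ∑ i ∈ Finset.univ.erase i₀, Real.exp (hH.eigenvalues i) :=
    Finset.sum_le_sum h2
  have hsum3 : ∑ i ∈ Finset.univ.erase i₀, ((1 : ℝ) + hH.eigenvalues i)
      = ((n : ℝ) - 1) - L := by
    rw [Finset.sum_add_distrib, Finset.sum_const, Finset.card_erase_of_mem (Finset.mem_univ i₀),
      Finset.sum_erase_eq_sub (Finset.mem_univ i₀), htr]
    have hn : 0 < n := Fin.pos i₀
    simp [Finset.card_univ]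
    push_cast [Nat.cast_sub hn]
    ring
  rw [hsplit]
  linarith [hsum2, hsum3.symm ▸ hsum2]
end

section
/- Let G be a connected α-regular graph with n vertices. Then EE(G) ≥ e^{α} + n - α - 1. -/
theorem stmt_4 {n : ℕ} (G : SimpleGraph (Fin n)) [DecidableRel G.Adj]
    (α : ℕ) (hreg : G.IsRegularOfDegree α) (hconn : G.Connected)
    (hH : (G.adjMatrix ℝ).IsHermitian) :
    ∑ i, Real.exp (hH.eigenvalues i) ≥
      Real.exp (α : ℝ) + (n : ℝ) - (α : ℝ) - 1 := by
  have hn : 0 < n := Fin.pos_iff_nonempty.mpr hconn.nonempty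
  -- α is an eigenvalue
  have hspec : (α : ℝ) ∈ spectrum ℝ (G.adjMatrix ℝ) := by
    rw [spectrum.mem_iff]
    intro hunit
    rw [Matrix.isUnit_iff_isUnit_det] at hunit
    have hdet : ((algebraMap ℝ (Matrix (Fin n) (Fin n) ℝ)) α - G.adjMatrix ℝ).det = 0 := by
      rw [← Matrix.exists_mulVec_eq_zero_iff]
      refine ⟨Function.const _ 1, ?_, ?_⟩
      · intro h
        have := congrFun h ⟨0, hn⟩
        simp [Function.const] at this
      · ext v
        rw [Matrix.sub_mulVec]
        simp [Matrix.smul_mulVec,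
          SimpleGraph.adjMatrix_mulVec_const_apply_of_regular hreg, hreg v]
    rw [hdet] at hunit
    simp at hunit
  rw [hH.spectrum_real_eq_range_eigenvalues] at hspec
  obtain ⟨i0, hi0⟩ := hspec
  -- sum of eigenvalues is the trace, which is 0
  have htr : ∑ i, hH.eigenvalues i = 0 := by
    have h1 : Matrix.trace (G.adjMatrix ℝ) =
        Matrix.trace (Matrix.diagonal (RCLike.ofReal ∘ hH.eigenvalues)) := by
      conv_lhs => rw [hH.spectral_theorem]
      rw [Unitary.conjStarAlgAut_apply]
      rw [Matrix.trace_mul_cycle]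
      rw [(Matrix.mem_unitaryGroup_iff'.mp (Matrix.IsHermitian.eigenvectorUnitary hH).2)]
      rw [one_mul]
    simp only [SimpleGraph.trace_adjMatrix, Matrix.trace_diagonal] at h1
    simpa using h1.symm
  -- split off i0
  classical
  rw [← Finset.add_sum_erase _ _ (Finset.mem_univ i0), hi0]
  have hrest : ∑ i ∈ Finset.univ.erase i0, hH.eigenvalues i = -(α : ℝ) := by
    have := Finset.add_sum_erase Finset.univ hH.eigenvalues (Finset.mem_univ i0)
    rw [htr, hi0] at this
    linarith
  have hbound : ∑ i ∈ Finset.univ.erase i0, Real.exp (hH.eigenvalues i) ≥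
      ∑ i ∈ Finset.univ.erase i0, (hH.eigenvalues i + 1) := by
    apply Finset.sum_le_sum
    intro i _
    exact Real.add_one_le_exp _
  have hcard : (Finset.univ.erase i0).card = n - 1 := by
    simp [Finset.card_erase_of_mem]
  rw [Finset.sum_add_distrib, hrest, Finset.sum_const, hcard] at hbound
  have hn1 : ((n - 1 : ℕ) : ℝ) = (n : ℝ) - 1 := by
    have : (1 : ℕ) ≤ n := hn
    push_cast [this]
    ring
  simp only [nsmul_eq_mul, mul_one] at hbound
  rw [hn1] at hbound
  linarith
end

section
/- Let G be a graph with n vertices and m edges whose largest signless Laplacian eigenvalue q₁ satisfies q₁ ≥ 4m/n. Then Σᵢ e^{qᵢ} ≥ e^{4m/n} + (n - 1) + 2m - 4m/n. -/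
lemma exp_sub_mono {a b : ℝ} (ha : 0 ≤ a) (hab : a ≤ b) :
    Real.exp a - a ≤ Real.exp b - b := by
  have h1 : Real.exp b = Real.exp a * Real.exp (b - a) := by
    rw [← Real.exp_add]; ring_nf
  have h2 : (b - a) + 1 ≤ Real.exp (b - a) := Real.add_one_le_exp _
  have h3 : (1 : ℝ) ≤ Real.exp a := Real.one_le_exp ha
  nlinarith

theorem stmt_9 {n : ℕ} (G : SimpleGraph (Fin n)) [DecidableRel G.Adj]
    (m : ℕ) (hm : m = G.edgeFinset.card)
    (hH : (G.degMatrix ℝ + G.adjMatrix ℝ).IsHermitian)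
    (hnonneg : ∀ i, 0 ≤ hH.eigenvalues i)
    (hsum : ∑ i, hH.eigenvalues i = 2 * (m : ℝ))
    (i₀ : Fin n) (hmax : ∀ i, hH.eigenvalues i ≤ hH.eigenvalues i₀)
    (hq : hH.eigenvalues i₀ ≥ 4 * (m : ℝ) / n) :
    ∑ i, Real.exp (hH.eigenvalues i) ≥
      Real.exp (4 * (m : ℝ) / n) + ((n : ℝ) - 1) + 2 * (m : ℝ) - 4 * (m : ℝ) / n := by
  set q := hH.eigenvalues with hqdef
  have hn : 1 ≤ n := Fin.pos i₀
  have hsplit : ∑ i, Real.exp (q i)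
      = Real.exp (q i₀) + ∑ i ∈ Finset.univ.erase i₀, Real.exp (q i) :=
    (Finset.add_sum_erase _ _ (Finset.mem_univ i₀)).symm
  have hsum' : ∑ i ∈ Finset.univ.erase i₀, q i = 2 * (m : ℝ) - q i₀ := by
    have := Finset.add_sum_erase Finset.univ q (Finset.mem_univ i₀)
    rw [hsum] at this; linarith
  have hcard : ((Finset.univ.erase i₀).card : ℝ) = (n : ℝ) - 1 := by
    rw [Finset.card_erase_of_mem (Finset.mem_univ i₀)]
    simp only [Finset.card_univ, Fintype.card_fin]
    have : n - 1 + 1 = n := Nat.succ_pred_eq_of_pos hn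
    push_cast [Nat.cast_sub hn]; ring
  have hrest : ∑ i ∈ Finset.univ.erase i₀, Real.exp (q i)
      ≥ ((n : ℝ) - 1) + (2 * (m : ℝ) - q i₀) := by
    have h := Finset.sum_le_sum (fun i (_ : i ∈ Finset.univ.erase i₀) =>
      Real.add_one_le_exp (q i))
    rw [Finset.sum_add_distrib, Finset.sum_const, nsmul_eq_mul, mul_one, hsum', hcard] at h
    linarith
  have hc0 : 0 ≤ 4 * (m : ℝ) / n := by positivity
  have hmon := exp_sub_mono hc0 hq
  rw [hsplit]
  linarith
end

section
/- Let M be an n×n symmetric nonnegative real matrix with eigenvalues ρ₁, ..., ρₙ and r = min over i of the i-th row sum. Then Σᵢ e^{ρᵢ} ≥ e^{r} + Tr(M) + (n - 1) - r. -/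
open Matrix Finset Real

theorem stmt_12 {n : ℕ} (hn : 0 < n) (M : Matrix (Fin n) (Fin n) ℝ)
    (hH : M.IsHermitian) (hnonneg : ∀ i j, 0 ≤ M i j) :
    haveI : Nonempty (Fin n) := ⟨⟨0, hn⟩⟩
    ∑ i, Real.exp (hH.eigenvalues i) ≥
      Real.exp (Finset.univ.inf' Finset.univ_nonempty (fun i => ∑ j, M i j)) + M.trace +
        ((n : ℝ) - 1) - Finset.univ.inf' Finset.univ_nonempty (fun i => ∑ j, M i j) := by
  haveI : Nonempty (Fin n) := ⟨⟨0, hn⟩⟩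
  set r := Finset.univ.inf' Finset.univ_nonempty (fun i => ∑ j, M i j) with hrdef
  have hr_le : ∀ i, r ≤ ∑ j, M i j := fun i => Finset.inf'_le _ (mem_univ i)
  have hr0 : 0 ≤ r := by
    obtain ⟨i, -, hi⟩ := Finset.exists_mem_eq_inf' (Finset.univ_nonempty (α := Fin n))
      (fun i => ∑ j, M i j)
    rw [hrdef, hi]
    exact Finset.sum_nonneg fun j _ => hnonneg i j
  -- trace = sum of eigenvalues
  have htr : M.trace = ∑ i, hH.eigenvalues i := by
    conv_lhs => rw [hH.spectral_theorem, Unitary.conjStarAlgAut_apply]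
    rw [Matrix.trace_mul_comm, ← mul_assoc, Unitary.coe_star_mul_self, one_mul, trace_diagonal]
    simp
  -- there is an eigenvalue at least r
  obtain ⟨j, hj⟩ : ∃ j, r ≤ hH.eigenvalues j := by
    set U : Matrix (Fin n) (Fin n) ℝ := (hH.eigenvectorUnitary : Matrix (Fin n) (Fin n) ℝ) with hU
    set v : Fin n → ℝ := fun _ => 1 with hv
    set w : Fin n → ℝ := Uᵀ *ᵥ v with hw
    have hstar : star U = Uᵀ := by
      rw [Matrix.star_eq_conjTranspose, conjTranspose_eq_transpose_of_trivial]
    have h1 : v ⬝ᵥ (M *ᵥ v) = ∑ i, hH.eigenvalues i * (w i)^2 := by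
      conv_lhs => rw [hH.spectral_theorem, Unitary.conjStarAlgAut_apply]
      rw [← mulVec_mulVec, ← mulVec_mulVec, dotProduct_mulVec, hstar]
      have hvU : v ᵥ* U = w := by rw [hw, mulVec_transpose]
      rw [hvU, ← hw]
      rw [show diagonal (RCLike.ofReal ∘ hH.eigenvalues) *ᵥ w = fun i => hH.eigenvalues i * w i
        from ?_]
      · simp only [dotProduct, sq]
        exact Finset.sum_congr rfl fun i _ => by ring
      · ext i; simp [mulVec_diagonal]
    have h2 : ∑ i, (w i)^2 = (n : ℝ) := by
      have hww : ∑ i, (w i)^2 = w ⬝ᵥ w := by simp [dotProduct, sq]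
      rw [hww, hw, dotProduct_mulVec, vecMul_transpose, mulVec_mulVec]
      have hUU : U * Uᵀ = 1 := by
        rw [← hstar]; exact Matrix.mem_unitaryGroup_iff.mp hH.eigenvectorUnitary.2
      rw [hUU, one_mulVec]
      simp [hv, dotProduct]
    -- sum of all entries
    have hS : (n : ℝ) * r ≤ v ⬝ᵥ (M *ᵥ v) := by
      have : v ⬝ᵥ (M *ᵥ v) = ∑ i, ∑ k, M i k := by
        simp [hv, dotProduct, mulVec]
      rw [this]
      calc (n : ℝ) * r = ∑ _i : Fin n, r := by simp [mul_comm]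
        _ ≤ ∑ i, ∑ k, M i k := Finset.sum_le_sum fun i _ => hr_le i
    -- let j be the index of a maximal eigenvalue
    obtain ⟨j, -, hj⟩ := Finset.exists_max_image (univ : Finset (Fin n)) hH.eigenvalues
      Finset.univ_nonempty
    refine ⟨j, ?_⟩
    by_contra hlt
    push_neg at hlt
    have hub : ∑ i, hH.eigenvalues i * (w i)^2 ≤ hH.eigenvalues j * (n : ℝ) := by
      calc ∑ i, hH.eigenvalues i * (w i)^2
          ≤ ∑ i, hH.eigenvalues j * (w i)^2 :=
            Finset.sum_le_sum fun i _ => mul_le_mul_of_nonneg_right (hj i (mem_univ i)) (sq_nonneg _)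
        _ = hH.eigenvalues j * (n : ℝ) := by rw [← Finset.mul_sum, h2]
    have hn' : (0 : ℝ) < n := by exact_mod_cast hn
    nlinarith [h1, hS]
  -- final assembly
  have hρr : 0 ≤ hH.eigenvalues j - r := by linarith
  have hexp1 : Real.exp r + (hH.eigenvalues j - r) ≤ Real.exp (hH.eigenvalues j) := by
    have h3 : hH.eigenvalues j - r + 1 ≤ Real.exp (hH.eigenvalues j - r) :=
      Real.add_one_le_exp _
    have h4 : (1 : ℝ) ≤ Real.exp r := Real.one_le_exp hr0
    have h5 : Real.exp (hH.eigenvalues j) = Real.exp r * Real.exp (hH.eigenvalues j - r) := by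
      rw [← Real.exp_add]; ring_nf
    nlinarith [Real.exp_pos r]
  have hsplit : ∑ i, Real.exp (hH.eigenvalues i) =
      Real.exp (hH.eigenvalues j) + ∑ i ∈ univ.erase j, Real.exp (hH.eigenvalues i) :=
    (Finset.add_sum_erase _ _ (mem_univ j)).symm
  have hrest : (M.trace - hH.eigenvalues j) + ((n : ℝ) - 1) ≤
      ∑ i ∈ univ.erase j, Real.exp (hH.eigenvalues i) := by
    have : ∑ i ∈ univ.erase j, (hH.eigenvalues i + 1) ≤
        ∑ i ∈ univ.erase j, Real.exp (hH.eigenvalues i) :=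
      Finset.sum_le_sum fun i _ => Real.add_one_le_exp _
    have hcard : ((univ.erase j).card : ℝ) = (n : ℝ) - 1 := by
      rw [Finset.card_erase_of_mem (mem_univ j)]
      simp [Nat.cast_sub hn]
    have hsum : ∑ i ∈ univ.erase j, (hH.eigenvalues i + 1) =
        (M.trace - hH.eigenvalues j) + ((n : ℝ) - 1) := by
      rw [Finset.sum_add_distrib, Finset.sum_const, nsmul_eq_mul, hcard, htr,
        ← Finset.add_sum_erase _ _ (mem_univ j)]
      ring
    linarith
  rw [ge_iff_le, hsplit]
  linarith
end

section
/- Let G have adjacency eigenvalues λ₁ ≥ ... ≥ λₙ with Σᵢ λᵢ = 0, exactly k of which are nonnegative. Then EE(G) ≥ E(G)/2 + e^{λ₁} + (k - 1) - λ₁, where E(G) = Σᵢ |λᵢ|. -/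
theorem stmt_15 {n : ℕ} (G : SimpleGraph (Fin n)) [DecidableRel G.Adj]
    (hH : (G.adjMatrix ℝ).IsHermitian)
    (hsum : ∑ i, hH.eigenvalues i = 0)
    (i₀ : Fin n) (hmax : ∀ i, hH.eigenvalues i ≤ hH.eigenvalues i₀)
    (k : ℕ) (hk : k = (Finset.univ.filter (fun i => 0 ≤ hH.eigenvalues i)).card) :
    ∑ i, Real.exp (hH.eigenvalues i) ≥
      (∑ i, |hH.eigenvalues i|) / 2 + Real.exp (hH.eigenvalues i₀) + ((k : ℝ) - 1) -
        hH.eigenvalues i₀ := by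
  set f := hH.eigenvalues with hf
  have h0 : 0 ≤ f i₀ := by
    by_contra h
    push_neg at h
    have : ∑ i, f i < 0 :=
      Finset.sum_neg (fun i _ => lt_of_le_of_lt (hmax i) h) ⟨i₀, Finset.mem_univ i₀⟩
    linarith
  set S := Finset.univ.filter (fun i => 0 ≤ f i) with hS
  have hi₀S : i₀ ∈ S := by simp [hS, h0]
  -- ∑ |f i| = 2 * ∑ i in S, f i
  have habs : ∑ i, |f i| = 2 * ∑ i ∈ S, f i := by
    have h1 : ∀ i : Fin n, |f i| = 2 * (if 0 ≤ f i then f i else 0) - f i := by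
      intro i
      split_ifs with h
      · rw [abs_of_nonneg h]; ring
      · rw [abs_of_neg (not_le.mp h)]; ring
    calc ∑ i, |f i| = ∑ i, (2 * (if 0 ≤ f i then f i else 0) - f i) :=
          Finset.sum_congr rfl (fun i _ => h1 i)
      _ = ∑ i, 2 * (if 0 ≤ f i then f i else 0) - ∑ i, f i := Finset.sum_sub_distrib _ _
      _ = 2 * ∑ i, (if 0 ≤ f i then f i else 0) := by rw [hsum, ← Finset.mul_sum]; ring
      _ = 2 * ∑ i ∈ S, f i := by rw [Finset.sum_filter]
  have hcard : ((S.erase i₀).card : ℝ) = (k : ℝ) - 1 := by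
    rw [Finset.card_erase_of_mem hi₀S, hk]
    have : 1 ≤ S.card := Finset.card_pos.mpr ⟨i₀, hi₀S⟩
    push_cast [Nat.cast_sub this]
    ring
  have hsubset : ∑ i ∈ S, Real.exp (f i) ≤ ∑ i, Real.exp (f i) :=
    Finset.sum_le_sum_of_subset_of_nonneg (Finset.subset_univ S)
      (fun i _ _ => (Real.exp_pos _).le)
  have hsplit : ∑ i ∈ S, Real.exp (f i)
      = Real.exp (f i₀) + ∑ i ∈ S.erase i₀, Real.exp (f i) :=
    (Finset.add_sum_erase S _ hi₀S).symm
  have herase : ∑ i ∈ S.erase i₀, (f i + 1) ≤ ∑ i ∈ S.erase i₀, Real.exp (f i) :=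
    Finset.sum_le_sum (fun i _ => by linarith [Real.add_one_le_exp (f i)])
  have hsum_erase : ∑ i ∈ S.erase i₀, (f i + 1)
      = (∑ i ∈ S, f i - f i₀) + ((k : ℝ) - 1) := by
    rw [Finset.sum_add_distrib, Finset.sum_const, nsmul_eq_mul, mul_one, hcard,
      Finset.sum_erase_eq_sub hi₀S]
  rw [habs]
  linarith
end
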